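/- Let E be a non-compact polish space. Then the strict topology β on C_b(E) (generated by the seminorms ρ_u(f) = ‖uf‖_∞ for u ∈ H⁺(E)) is not metrizable; equivalently, the zero function has no countable neighborhood basis in (C_b(E),β). -/

import Mathlib

open Filter Topology
open scoped ENNReal

/-- `H⁺(E)`: nonnegative functions whose superlevel sets `{u ≥ α}` are compact
for every `α > 0`. -/
def Hplus (E : Type*) [TopologicalSpace E] : Set (E → ℝ) :=
  {u | (∀ x, 0 ≤ u x) ∧ ∀ α : ℝ, 0 < α → IsCompact {x | α ≤ u x}}

/-- The seminorm `ρ_u(f) = ‖u f‖_∞` (valued in `ℝ≥0∞`). -/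
noncomputable def strictSeminorm {E : Type*} [TopologicalSpace E]
    (u : E → ℝ) (f : BoundedContinuousFunction E ℝ) : ℝ≥0∞ :=
  ⨆ x : E, ENNReal.ofReal (u x * |f x|)

/-- The strict topology `β` on `C_b(E)`, generated by the balls of the
seminorms `ρ_u`, `u ∈ H⁺(E)`. -/
noncomputable def strictTopology (E : Type*) [TopologicalSpace E] :
    TopologicalSpace (BoundedContinuousFunction E ℝ) :=
  TopologicalSpace.generateFrom
    {S | ∃ u ∈ Hplus E, ∃ g : BoundedContinuousFunction E ℝ, ∃ r : ℝ, 0 < r ∧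
      S = {f | strictSeminorm u (f - g) < ENNReal.ofReal r}}

section Aux

variable {E : Type*} [TopologicalSpace E]

lemma ssn_apply_le (u : E → ℝ) (f : BoundedContinuousFunction E ℝ) (x : E) :
    ENNReal.ofReal (u x * |f x|) ≤ strictSeminorm u f := by
  exact le_iSup (fun x => ENNReal.ofReal (u x * |f x|)) x

lemma ssn_le {u : E → ℝ} {f : BoundedContinuousFunction E ℝ} {c : ℝ}
    (h : ∀ x, u x * |f x| ≤ c) : strictSeminorm u f ≤ ENNReal.ofReal c :=
  iSup_le fun x => ENNReal.ofReal_le_ofReal (h x)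

lemma ssn_zero (u : E → ℝ) : strictSeminorm u (0 : BoundedContinuousFunction E ℝ) = 0 := by
  simp [strictSeminorm]

lemma ssn_sub_le {u : E → ℝ} (hu : ∀ x, 0 ≤ u x) (f g : BoundedContinuousFunction E ℝ) :
    strictSeminorm u (f - g) ≤ strictSeminorm u f + strictSeminorm u g := by
  refine iSup_le fun x => ?_
  have h1 : u x * |(f - g) x| ≤ u x * |f x| + u x * |g x| := by
    have h2 : |f x - g x| ≤ |f x| + |g x| := abs_sub _ _
    calc u x * |(f - g) x| = u x * |f x - g x| := by simp
      _ ≤ u x * (|f x| + |g x|) := mul_le_mul_of_nonneg_left h2 (hu x)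
      _ = _ := mul_add _ _ _
  calc ENNReal.ofReal (u x * |(f - g) x|)
      ≤ ENNReal.ofReal (u x * |f x| + u x * |g x|) := ENNReal.ofReal_le_ofReal h1
    _ = ENNReal.ofReal (u x * |f x|) + ENNReal.ofReal (u x * |g x|) :=
        ENNReal.ofReal_add (mul_nonneg (hu x) (abs_nonneg _)) (mul_nonneg (hu x) (abs_nonneg _))
    _ ≤ _ := add_le_add (ssn_apply_le u f x) (ssn_apply_le u g x)

lemma ssn_neg (u : E → ℝ) (g : BoundedContinuousFunction E ℝ) :
    strictSeminorm u ((0 : BoundedContinuousFunction E ℝ) - g) = strictSeminorm u g := by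
  unfold strictSeminorm
  congr 1; ext x
  simp [abs_neg]

/-- Key absorption lemma: any generating set containing `0` contains a centered ball. -/
lemma key {u : E → ℝ} (hu : ∀ x, 0 ≤ u x) {g : BoundedContinuousFunction E ℝ} {r : ℝ}
    (hr : 0 < r)
    (h0 : strictSeminorm u ((0 : BoundedContinuousFunction E ℝ) - g) < ENNReal.ofReal r) :
    ∃ ε : ℝ, 0 < ε ∧ ∀ f, strictSeminorm u f < ENNReal.ofReal ε →
      strictSeminorm u (f - g) < ENNReal.ofReal r := by
  rw [ssn_neg] at h0
  have hfin : strictSeminorm u g ≠ ⊤ := h0.ne_top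
  set t := (strictSeminorm u g).toReal with ht
  have htr : t < r := by
    have := (ENNReal.toReal_lt_toReal hfin ENNReal.ofReal_ne_top).mpr h0
    rwa [ENNReal.toReal_ofReal hr.le] at this
  refine ⟨r - t, by linarith, fun f hf => ?_⟩
  calc strictSeminorm u (f - g) ≤ strictSeminorm u f + strictSeminorm u g := ssn_sub_le hu f g
    _ < ENNReal.ofReal (r - t) + strictSeminorm u g := ENNReal.add_lt_add_right hfin hf
    _ = ENNReal.ofReal (r - t) + ENNReal.ofReal t := by rw [ht, ENNReal.ofReal_toReal hfin]
    _ = ENNReal.ofReal r := by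
        rw [← ENNReal.ofReal_add (by linarith) ENNReal.toReal_nonneg]
        congr 1; linarith
    _ ≤ ENNReal.ofReal r := le_rfl

lemma maxHplus {u v : E → ℝ} (hu : u ∈ Hplus E) (hv : v ∈ Hplus E) [T2Space E] :
    (fun x => max (u x) (v x)) ∈ Hplus E := by
  refine ⟨fun x => le_max_of_le_left (hu.1 x), fun α hα => ?_⟩
  have : {x | α ≤ max (u x) (v x)} = {x | α ≤ u x} ∪ {x | α ≤ v x} := by
    ext x; simp [le_max_iff]
  rw [this]
  exact (hu.2 α hα).union (hv.2 α hα)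

lemma ssn_le_max (u v : E → ℝ) (f : BoundedContinuousFunction E ℝ) :
    strictSeminorm u f ≤ strictSeminorm (fun x => max (u x) (v x)) f :=
  iSup_mono fun x => ENNReal.ofReal_le_ofReal
    (mul_le_mul_of_nonneg_right (le_max_left _ _) (abs_nonneg _))

lemma ssn_le_max' (u v : E → ℝ) (f : BoundedContinuousFunction E ℝ) :
    strictSeminorm v f ≤ strictSeminorm (fun x => max (u x) (v x)) f :=
  iSup_mono fun x => ENNReal.ofReal_le_ofReal
    (mul_le_mul_of_nonneg_right (le_max_right _ _) (abs_nonneg _))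

/-- Any generating set containing `0` contains a centered ball. -/
lemma gen_ball {S : Set (BoundedContinuousFunction E ℝ)}
    (hS : S ∈ {S | ∃ u ∈ Hplus E, ∃ g : BoundedContinuousFunction E ℝ, ∃ r : ℝ, 0 < r ∧
      S = {f | strictSeminorm u (f - g) < ENNReal.ofReal r}})
    (h0 : (0 : BoundedContinuousFunction E ℝ) ∈ S) :
    ∃ u ∈ Hplus E, ∃ ε : ℝ, 0 < ε ∧
      {f | strictSeminorm u f < ENNReal.ofReal ε} ⊆ S := by
  obtain ⟨u, hu, g, r, hr, rfl⟩ := hS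
  obtain ⟨ε, hε, hball⟩ := key hu.1 hr h0
  exact ⟨u, hu, ε, hε, fun f hf => hball f hf⟩

lemma zeroHplus : (fun _ : E => (0 : ℝ)) ∈ Hplus E := by
  refine ⟨fun _ => le_rfl, fun α hα => ?_⟩
  have : {x : E | α ≤ (0 : ℝ)} = ∅ := by
    ext x; simp [not_le.mpr hα]
  rw [this]; exact isCompact_empty

/-- Every neighborhood of `0` in the strict topology contains a centered ball. -/
lemma nhds_zero_ball [T2Space E] {V : Set (BoundedContinuousFunction E ℝ)}
    (hV : V ∈ @nhds _ (strictTopology E) 0) :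
    ∃ u ∈ Hplus E, ∃ ε : ℝ, 0 < ε ∧
      {f | strictSeminorm u f < ENNReal.ofReal ε} ⊆ V := by
  rw [strictTopology, TopologicalSpace.nhds_generateFrom] at hV
  set G : Set (Set (BoundedContinuousFunction E ℝ)) :=
    {S | ∃ u ∈ Hplus E, ∃ g : BoundedContinuousFunction E ℝ, ∃ r : ℝ, 0 < r ∧
      S = {f | strictSeminorm u (f - g) < ENNReal.ofReal r}} with hG
  have hmemball : ∀ (u : E → ℝ), ∀ r : ℝ, 0 < r →
      {f : BoundedContinuousFunction E ℝ | strictSeminorm u (f - 0) < ENNReal.ofReal r}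
        = {f | strictSeminorm u f < ENNReal.ofReal r} := by
    intro u r hr; ext f; simp
  have hdir : DirectedOn ((𝓟 ⁻¹'o (· ≥ ·)))
      {s | (0 : BoundedContinuousFunction E ℝ) ∈ s ∧ s ∈ G} := by
    rintro S₁ ⟨h01, hS₁⟩ S₂ ⟨h02, hS₂⟩
    obtain ⟨u₁, hu₁, ε₁, hε₁, hb₁⟩ := gen_ball hS₁ h01
    obtain ⟨u₂, hu₂, ε₂, hε₂, hb₂⟩ := gen_ball hS₂ h02
    set w : E → ℝ := fun x => max (u₁ x) (u₂ x) with hw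
    set ε := min ε₁ ε₂ with hε
    have hεpos : 0 < ε := lt_min hε₁ hε₂
    refine ⟨{f | strictSeminorm w (f - 0) < ENNReal.ofReal ε}, ⟨?_, ?_⟩, ?_, ?_⟩
    · simp [ssn_zero, ENNReal.ofReal_pos.mpr hεpos]
    · exact ⟨w, maxHplus hu₁ hu₂, 0, ε, hεpos, rfl⟩
    · refine Filter.principal_mono.mpr fun f hf => ?_
      rw [hmemball w ε hεpos] at hf
      exact hb₁ (lt_of_le_of_lt (ssn_le_max u₁ u₂ f)
        (hf.trans_le (ENNReal.ofReal_le_ofReal (min_le_left _ _))))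
    · refine Filter.principal_mono.mpr fun f hf => ?_
      rw [hmemball w ε hεpos] at hf
      exact hb₂ (lt_of_le_of_lt (ssn_le_max' u₁ u₂ f)
        (hf.trans_le (ENNReal.ofReal_le_ofReal (min_le_right _ _))))
  have hne : {s | (0 : BoundedContinuousFunction E ℝ) ∈ s ∧ s ∈ G}.Nonempty := by
    refine ⟨{f | strictSeminorm (fun _ => (0:ℝ)) (f - 0) < ENNReal.ofReal 1}, ?_, ?_⟩
    · simp [ssn_zero]
    · exact ⟨_, zeroHplus, 0, 1, one_pos, rfl⟩
  rw [mem_biInf_of_directed hdir hne] at hV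
  obtain ⟨S, ⟨h0S, hSG⟩, hSV⟩ := hV
  obtain ⟨u, hu, ε, hε, hball⟩ := gen_ball hSG h0S
  exact ⟨u, hu, ε, hε, hball.trans hSV⟩

/-- A centered ball is a neighborhood of `0` in the strict topology. -/
lemma ball_nhds {u : E → ℝ} (hu : u ∈ Hplus E) {r : ℝ} (hr : 0 < r) :
    {f : BoundedContinuousFunction E ℝ | strictSeminorm u f < ENNReal.ofReal r}
      ∈ @nhds _ (strictTopology E) 0 := by
  have hopen : IsOpen[strictTopology E]
      {f : BoundedContinuousFunction E ℝ | strictSeminorm u f < ENNReal.ofReal r} := by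
    have heq : {f : BoundedContinuousFunction E ℝ | strictSeminorm u f < ENNReal.ofReal r}
        = {f | strictSeminorm u (f - 0) < ENNReal.ofReal r} := by
      ext f; simp
    rw [heq, strictTopology]
    exact TopologicalSpace.isOpen_generateFrom_of_mem ⟨u, hu, 0, r, hr, rfl⟩
  have h0 : (0 : BoundedContinuousFunction E ℝ)
      ∈ {f : BoundedContinuousFunction E ℝ | strictSeminorm u f < ENNReal.ofReal r} := by
    simp [Set.mem_setOf_eq, ssn_zero, ENNReal.ofReal_pos.mpr hr]
  letI : TopologicalSpace (BoundedContinuousFunction E ℝ) := strictTopology E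
  exact hopen.mem_nhds h0

lemma exists_small (hnc : ¬ CompactSpace E) {u : E → ℝ} (hu : u ∈ Hplus E)
    {c : ℝ} (hc : 0 < c) : ∃ y : E, u y < c := by
  by_contra h
  push_neg at h
  have : {x : E | c ≤ u x} = Set.univ := by
    ext x; simpa using h x
  exact hnc (isCompact_univ_iff.mp (this ▸ hu.2 c hc))

end Aux

theorem stmt18 {E : Type*} [TopologicalSpace E] [PolishSpace E]
    (hnc : ¬ CompactSpace E) :
    ¬ (@nhds (BoundedContinuousFunction E ℝ) (strictTopology E) 0).IsCountablyGenerated := by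
  intro hcg
  classical
  letI := TopologicalSpace.upgradeIsCompletelyMetrizable E
  obtain ⟨V, hV⟩ := @Filter.exists_antitone_basis _ _ hcg
  -- For each n, extract a centered ball inside V n
  have hVmem : ∀ n, V n ∈ @nhds (BoundedContinuousFunction E ℝ) (strictTopology E) 0 :=
    fun n => hV.toHasBasis.mem_of_mem trivial
  choose u hu r hr hball using fun n => nhds_zero_ball (hVmem n)
  -- choose points where u n is small
  set c : ℕ → ℝ := fun n => r n / (2 * (n + 1)) with hc
  have hcpos : ∀ n, 0 < c n := fun n => by
    have := hr n; positivity
  choose y hy using fun n => exists_small hnc (hu n) (hcpos n)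
  -- the diagonal function û
  set uh : E → ℝ := fun z => if h : ∃ n, z = y n then (((Nat.find h : ℝ)) + 1)⁻¹ else 0 with huh
  have huhmem : uh ∈ Hplus E := by
    constructor
    · intro x
      by_cases h : ∃ n, x = y n
      · simp only [huh, dif_pos h]
        positivity
      · simp [huh, dif_neg h]
    · intro α hα
      have hsub : {x | α ≤ uh x} ⊆ y '' (Set.Iic ⌈α⁻¹⌉₊) := by
        intro z hz
        by_cases h : ∃ n, z = y n
        · refine ⟨Nat.find h, ?_, (Nat.find_spec h).symm⟩
          simp only [Set.mem_setOf_eq, huh, dif_pos h] at hz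
          have h1 : ((Nat.find h : ℝ) + 1) ≤ α⁻¹ := by
            rwa [le_inv_comm₀ hα (by positivity)] at hz
          have h2 : (Nat.find h : ℝ) ≤ (⌈α⁻¹⌉₊ : ℝ) := by
            calc (Nat.find h : ℝ) ≤ (Nat.find h : ℝ) + 1 := by linarith
              _ ≤ α⁻¹ := h1
              _ ≤ ⌈α⁻¹⌉₊ := Nat.le_ceil _
          exact_mod_cast h2
        · simp only [Set.mem_setOf_eq, huh, dif_neg h] at hz
          exact absurd hz (not_le.mpr hα)
      exact (((Set.finite_Iic _).image y).subset hsub).isCompact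
  -- the ball of radius 1 around 0 for uh is a strict neighborhood of 0
  have hW := ball_nhds huhmem one_pos
  obtain ⟨N, -, hVW⟩ := hV.toHasBasis.mem_iff.mp hW
  -- construct the bump function at y N
  have hopenU : IsOpen {z : E | u N z < c N} := by
    have : {z : E | u N z < c N} = {z : E | c N ≤ u N z}ᶜ := by
      ext z; simp [not_le]
    rw [this]
    exact (((hu N).2 (c N) (hcpos N)).isClosed).isOpen_compl
  obtain ⟨δ, hδ, hballU⟩ := Metric.isOpen_iff.mp hopenU (y N) (hy N)
  set φ : E → ℝ := fun z => ((N : ℝ) + 1) * max 0 (1 - dist z (y N) / δ) with hφ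
  have hφcont : Continuous φ :=
    continuous_const.mul (continuous_const.max
      (continuous_const.sub ((continuous_id.dist continuous_const).div_const δ)))
  have hφbd : ∀ z, ‖φ z‖ ≤ (N : ℝ) + 1 := by
    intro z
    have h1 : (0:ℝ) ≤ max 0 (1 - dist z (y N) / δ) := le_max_left _ _
    have h2 : max 0 (1 - dist z (y N) / δ) ≤ 1 := by
      refine max_le one_pos.le ?_
      have : 0 ≤ dist z (y N) / δ := div_nonneg dist_nonneg hδ.le
      linarith
    have hN : (0:ℝ) ≤ (N : ℝ) := Nat.cast_nonneg N
    simp only [hφ]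
    rw [Real.norm_eq_abs, abs_of_nonneg (mul_nonneg (by positivity) h1)]
    nlinarith
  set f : BoundedContinuousFunction E ℝ :=
    BoundedContinuousFunction.ofNormedAddCommGroup φ hφcont ((N : ℝ) + 1) hφbd with hf
  have hfapp : ∀ z, f z = φ z := fun z => rfl
  -- f is in the ball of u N
  have hfsmall : ∀ z, u N z * |f z| ≤ r N / 2 := by
    intro z
    rcases lt_or_ge (dist z (y N)) δ with hlt | hge
    · have hz : u N z < c N := hballU hlt
      have h1 : |f z| ≤ (N : ℝ) + 1 := by
        rw [← Real.norm_eq_abs, hfapp]; exact hφbd z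
      have h2 : 0 ≤ u N z := (hu N).1 z
      have h3 : u N z * |f z| ≤ c N * ((N : ℝ) + 1) := by
        apply mul_le_mul hz.le h1 (abs_nonneg _) (hcpos N).le
      calc u N z * |f z| ≤ c N * ((N : ℝ) + 1) := h3
        _ = r N / 2 := by
            rw [hc]; field_simp
    · have hz : φ z = 0 := by
        have h1 : 1 - dist z (y N) / δ ≤ 0 := by
          have : 1 ≤ dist z (y N) / δ := (one_le_div hδ).mpr hge
          linarith
        simp [hφ, max_eq_left h1]
      rw [hfapp, hz]
      simp only [abs_zero, mul_zero]
      have := hr N; linarith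
  have hfmem : f ∈ {f : BoundedContinuousFunction E ℝ |
      strictSeminorm (u N) f < ENNReal.ofReal (r N)} := by
    have h1 : strictSeminorm (u N) f ≤ ENNReal.ofReal (r N / 2) := ssn_le hfsmall
    have h2 : ENNReal.ofReal (r N / 2) < ENNReal.ofReal (r N) :=
      (ENNReal.ofReal_lt_ofReal_iff (hr N)).mpr (by have := hr N; linarith)
    exact h1.trans_lt h2
  -- hence f ∈ W, the ball of uh with radius 1
  have hfW : strictSeminorm uh f < ENNReal.ofReal 1 := hVW (hball N hfmem)
  -- but the value at y N is too big
  have hex : ∃ n, y N = y n := ⟨N, rfl⟩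
  have hfind : (Nat.find hex : ℝ) ≤ (N : ℝ) := by
    exact_mod_cast Nat.find_min' hex rfl
  have hval : (1 : ℝ) ≤ uh (y N) * |f (y N)| := by
    have hfy : f (y N) = (N : ℝ) + 1 := by
      rw [hfapp]
      simp [hφ, dist_self, max_eq_right one_pos.le]
    have huhy : uh (y N) = ((Nat.find hex : ℝ) + 1)⁻¹ := by
      simp only [huh, dif_pos hex]
    have hpos : (0:ℝ) < (Nat.find hex : ℝ) + 1 := by positivity
    rw [hfy, huhy, abs_of_nonneg (by positivity : (0:ℝ) ≤ (N:ℝ) + 1),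
      inv_mul_eq_div, le_div_iff₀ hpos, one_mul]
    linarith
  have hge1 : ENNReal.ofReal 1 ≤ strictSeminorm uh f := by
    calc ENNReal.ofReal 1 ≤ ENNReal.ofReal (uh (y N) * |f (y N)|) :=
          ENNReal.ofReal_le_ofReal hval
      _ ≤ strictSeminorm uh f := ssn_apply_le uh f (y N)
  exact absurd hfW (not_lt.mpr hge1)
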